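/- Let A be an invertible n×n complex matrix such that AᵀA = Δ is a diagonal matrix with diagonal entries z₁,…,zₙ. Fix v rows i₁,…,i_v and v columns k₁,…,k_v, let A_(v) be the corresponding v×v submatrix, let A^(v) be the complementary (n−v)×(n−v) submatrix (to rows i_{v+1},…,i_n and columns k_{v+1},…,k_n), and let σ be the permutation mapping i_j to k_j. Then det A_(v) = sgn(σ) · (∏_{j=1}^v z_{k_j}) / det A · det A^(v). -/

import Mathlib

open Matrix

lemma jacobi_key {m p : Type*} [Fintype m] [Fintype p] [DecidableEq m] [DecidableEq p]
    (B : Matrix (m ⊕ p) (m ⊕ p) ℂ) (hB : IsUnit B.det)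
    (w : m ⊕ p → ℂ) (hd : Bᵀ * B = diagonal w) :
    B.toBlocks₁₁.det = (∏ a : m, w (Sum.inl a)) / B.det * B.toBlocks₂₂.det := by
  have hdet2 : ∏ x, w x = B.det ^ 2 := by
    rw [← det_diagonal, ← hd, det_mul, det_transpose]; ring
  have hB0 : B.det ≠ 0 := hB.ne_zero
  have hw0 : ∀ x, w x ≠ 0 := by
    intro x
    have : ∏ y, w y ≠ 0 := by rw [hdet2]; exact pow_ne_zero _ hB0
    exact Finset.prod_ne_zero_iff.mp this x (Finset.mem_univ x)
  have hDinv : (diagonal w)⁻¹ = diagonal (fun x => (w x)⁻¹) := by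
    apply inv_eq_left_inv
    rw [diagonal_mul_diagonal]
    convert diagonal_one using 2
    ext x
    exact inv_mul_cancel₀ (hw0 x)
  have hDunit : IsUnit (diagonal w).det := by
    rw [det_diagonal, hdet2]; exact isUnit_iff_ne_zero.2 (pow_ne_zero _ hB0)
  have hinv : B⁻¹ = (diagonal w)⁻¹ * Bᵀ := by
    apply inv_eq_left_inv
    rw [mul_assoc, hd, nonsing_inv_mul _ hDunit]
  set C := B⁻¹ with hC
  have hBC : B * C = 1 := mul_nonsing_inv B hB
  have hblocks : fromBlocks
      (B.toBlocks₁₁ * C.toBlocks₁₁ + B.toBlocks₁₂ * C.toBlocks₂₁)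
      (B.toBlocks₁₁ * C.toBlocks₁₂ + B.toBlocks₁₂ * C.toBlocks₂₂)
      (B.toBlocks₂₁ * C.toBlocks₁₁ + B.toBlocks₂₂ * C.toBlocks₂₁)
      (B.toBlocks₂₁ * C.toBlocks₁₂ + B.toBlocks₂₂ * C.toBlocks₂₂)
      = fromBlocks 1 0 0 1 := by
    rw [← fromBlocks_multiply, fromBlocks_toBlocks, fromBlocks_toBlocks, hBC, fromBlocks_one]
  have h12 : B.toBlocks₁₁ * C.toBlocks₁₂ + B.toBlocks₁₂ * C.toBlocks₂₂ = 0 :=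
    by simpa only [toBlocks_fromBlocks₁₂] using congrArg toBlocks₁₂ hblocks
  have h22 : B.toBlocks₂₁ * C.toBlocks₁₂ + B.toBlocks₂₂ * C.toBlocks₂₂ = 1 :=
    by simpa only [toBlocks_fromBlocks₂₂] using congrArg toBlocks₂₂ hblocks
  have key : B * fromBlocks 1 C.toBlocks₁₂ 0 C.toBlocks₂₂
      = fromBlocks B.toBlocks₁₁ 0 B.toBlocks₂₁ 1 := by
    conv_lhs => rw [← fromBlocks_toBlocks B]
    rw [fromBlocks_multiply, h12, h22]
    simp [Matrix.mul_zero, Matrix.mul_one]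
  have hdetkey : B.det * C.toBlocks₂₂.det = B.toBlocks₁₁.det := by
    have := congrArg det key
    simp only [det_mul, det_fromBlocks_zero₂₁, det_fromBlocks_zero₁₂, det_one, one_mul,
      mul_one] at this
    exact this
  have hC22 : C.toBlocks₂₂ = diagonal (fun a : p => (w (Sum.inr a))⁻¹) * (B.toBlocks₂₂)ᵀ := by
    ext a b
    simp [toBlocks₂₂, hinv, hDinv, diagonal_mul, transpose_apply]
  have hC22det : C.toBlocks₂₂.det = (∏ a : p, (w (Sum.inr a))⁻¹) * B.toBlocks₂₂.det := by
    rw [hC22, det_mul, det_diagonal, det_transpose]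
  have hprodsum : (∏ a : m, w (Sum.inl a)) * (∏ a : p, w (Sum.inr a)) = B.det ^ 2 := by
    rw [← hdet2, Fintype.prod_sum_type]
  have hpr0 : (∏ a : p, w (Sum.inr a)) ≠ 0 :=
    Finset.prod_ne_zero_iff.mpr fun a _ => hw0 _
  rw [← hdetkey, hC22det]
  rw [Finset.prod_inv_distrib]
  field_simp
  linear_combination (-B.toBlocks₂₂.det) * hprodsum

/-- **Proposition 2.1.** Let `A` be an invertible `n × n` complex matrix with `Aᵀ A = Δ(z₁,…,zₙ)`
diagonal.  Choose orderings `i, k` of the rows and columns; let `A_(v)` be the `v × v` submatrix on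
rows `i₁,…,i_v` and columns `k₁,…,k_v`, `A^(v)` the complementary `(n-v) × (n-v)` submatrix on rows
`i_{v+1},…,i_n` and columns `k_{v+1},…,k_n`, and `σ` the permutation with `σ(i_j) = k_j`.  Then
`det A_(v) = sgn σ · (∏_{j=1}^v z_{k_j}) / det A · det A^(v)`. -/
theorem submatrix_det_complement (n v : ℕ) (hv : v ≤ n)
    (A : Matrix (Fin n) (Fin n) ℂ) (hA : IsUnit A.det)
    (z : Fin n → ℂ) (hdiag : Aᵀ * A = Matrix.diagonal z)
    (i k : Equiv.Perm (Fin n))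
    (Asub : Matrix (Fin v) (Fin v) ℂ)
    (hAsub : Asub = A.submatrix (fun a : Fin v => i (Fin.castLE hv a))
      (fun b : Fin v => k (Fin.castLE hv b)))
    (Acomp : Matrix (Fin (n - v)) (Fin (n - v)) ℂ)
    (hAcomp : Acomp = A.submatrix
      (fun a : Fin (n - v) => i ⟨v + a.1, by omega⟩)
      (fun b : Fin (n - v) => k ⟨v + b.1, by omega⟩))
    (σ : Equiv.Perm (Fin n)) (hσ : σ = i.symm.trans k) :
    Asub.det = (Equiv.Perm.sign σ : ℂ) *
      (∏ j : Fin v, z (k (Fin.castLE hv j))) / A.det * Acomp.det := by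
  have hnv : v + (n - v) = n := by omega
  set e : Fin v ⊕ Fin (n - v) ≃ Fin n := finSumFinEquiv.trans (finCongr hnv) with he
  set r : Fin v ⊕ Fin (n - v) ≃ Fin n := e.trans i with hr
  set c : Fin v ⊕ Fin (n - v) ≃ Fin n := e.trans k with hc
  set B : Matrix (Fin v ⊕ Fin (n - v)) (Fin v ⊕ Fin (n - v)) ℂ := A.submatrix r c with hBdef
  have heinl : ∀ a : Fin v, e (Sum.inl a) = Fin.castLE hv a := by
    intro a; apply Fin.ext; simp [he]
  have heinr : ∀ a : Fin (n - v), e (Sum.inr a) = ⟨v + a.1, by omega⟩ := by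
    intro a; apply Fin.ext; simp [he]
  have hBd : Bᵀ * B = diagonal (z ∘ c) := by
    rw [hBdef, transpose_submatrix, ← submatrix_diagonal_equiv z c, ← hdiag]
    exact submatrix_mul_equiv Aᵀ A (⇑c) r (⇑c)
  have hBperm : B = (A.submatrix id ⇑σ).submatrix ⇑r ⇑r := by
    ext a b
    simp [hBdef, hσ, hr, hc]
  have hdetB : B.det = (Equiv.Perm.sign σ : ℂ) * A.det := by
    rw [hBperm, det_submatrix_equiv_self r, det_permute']
  have hsign : (Equiv.Perm.sign σ : ℂ) ≠ 0 := by
    rcases Int.units_eq_one_or (Equiv.Perm.sign σ) with h | h <;> rw [h] <;> norm_num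
  have hA0 : A.det ≠ 0 := hA.ne_zero
  have hBunit : IsUnit B.det := by
    rw [hdetB]; exact isUnit_iff_ne_zero.2 (mul_ne_zero hsign hA0)
  have h11 : B.toBlocks₁₁ = Asub := by
    ext a b
    simp [toBlocks₁₁, hBdef, hAsub, hr, hc, heinl]
  have h22 : B.toBlocks₂₂ = Acomp := by
    ext a b
    simp [toBlocks₂₂, hBdef, hAcomp, hr, hc, heinr]
  have hjac := jacobi_key B hBunit (z ∘ c) hBd
  rw [h11, h22, hdetB] at hjac
  have hprod : (∏ a : Fin v, (z ∘ c) (Sum.inl a)) = ∏ j : Fin v, z (k (Fin.castLE hv j)) := by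
    apply Finset.prod_congr rfl
    intro a _
    simp [hc, heinl]
  rw [hjac, hprod]
  have hs2 : (Equiv.Perm.sign σ : ℂ) * (Equiv.Perm.sign σ : ℂ) = 1 := by
    rcases Int.units_eq_one_or (Equiv.Perm.sign σ) with h | h <;> rw [h] <;> norm_num
  refine congrArg (· * Acomp.det) ?_
  field_simp
  linear_combination (-(∏ j : Fin v, z (k (Fin.castLE hv j)))) * hs2
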